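/- Let f be analytic on the disk U(r₀) = {z : |z| < r₀} with f(z) = z + Σₙ≥2 aₙ zⁿ, and suppose there exist interlacing positive sequences as in the Bessel setting such that z f''(z)/f'(z) = −Σₙ≥1 2z²/(αₙ² − z²) for |z| < α₁, where (αₙ) is strictly increasing positive with Σ 1/αₙ² < ∞ and α₁ ≤ r₀. Then for all |z| ≤ r < α₁: Re(1 + z f''(z)/f'(z)) − |z f''(z)/f'(z)| ≥ 1 + 2 r f''(r)/f'(r), i.e. ≥ 1 − Σₙ≥1 4r²/(αₙ² − r²). -/

import Mathlib

set_option maxHeartbeats 1000000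


theorem stmt15 (f : ℂ → ℂ) (r₀ : ℝ) (hr₀ : 0 < r₀)
    (hf : AnalyticOn ℂ f (Metric.ball 0 r₀))
    (hf0 : f 0 = 0) (hf'0 : deriv f 0 = 1)
    (α : ℕ → ℝ) (hαpos : ∀ n, 0 < α n) (hαmono : StrictMono α)
    (hαsum : Summable fun n => 1 / (α n) ^ 2) (hα₁ : α 0 ≤ r₀)
    (hexp : ∀ z : ℂ, ‖z‖ < α 0 →
      z * deriv (deriv f) z / deriv f z = -∑' n, 2 * z ^ 2 / (((α n : ℝ):ℂ) ^ 2 - z ^ 2)) :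
    ∀ r : ℝ, ∀ z : ℂ, ‖z‖ ≤ r → r < α 0 →
      ((1 : ℂ) + z * deriv (deriv f) z / deriv f z).re
          - ‖z * deriv (deriv f) z / deriv f z‖ ≥
        ((1 : ℂ) + 2 * ((r:ℂ) * deriv (deriv f) (r:ℂ) / deriv f (r:ℂ))).re ∧
      ((1 : ℂ) + z * deriv (deriv f) z / deriv f z).re
          - ‖z * deriv (deriv f) z / deriv f z‖ ≥
        1 - ∑' n, 4 * r ^ 2 / ((α n) ^ 2 - r ^ 2) := by
  intro r z hzr hrα
  have hr0 : 0 ≤ r := le_trans (norm_nonneg z) hzr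
  have hzlt : ‖z‖ < α 0 := lt_of_le_of_lt hzr hrα
  have hα0 : 0 < α 0 := hαpos 0
  -- positivity of denominators
  have hdpos : ∀ n, 0 < α n ^ 2 - r ^ 2 := by
    intro n
    have h1 : α 0 ≤ α n := hαmono.monotone (Nat.zero_le n)
    nlinarith [hαpos n]
  set g : ℕ → ℝ := fun n => 2 * r ^ 2 / (α n ^ 2 - r ^ 2) with hgdef
  have hgnonneg : ∀ n, 0 ≤ g n := fun n =>
    div_nonneg (by positivity) (hdpos n).le
  -- summability of g
  have hbound : ∀ n, g n ≤ (2 * r ^ 2 * α 0 ^ 2 / (α 0 ^ 2 - r ^ 2)) * (1 / α n ^ 2) := by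
    intro n
    have h1 : 0 < α n ^ 2 - r ^ 2 := hdpos n
    have h0 : 0 < α 0 ^ 2 - r ^ 2 := hdpos 0
    have h2 : 0 < α n ^ 2 := pow_pos (hαpos n) 2
    have h3 : α 0 ^ 2 ≤ α n ^ 2 := by
      have := hαmono.monotone (Nat.zero_le n)
      nlinarith [hαpos n]
    rw [hgdef, mul_one_div, div_div, div_le_div_iff₀ h1 (mul_pos h0 h2)]
    nlinarith [sq_nonneg r, mul_le_mul_of_nonneg_left h3 (show (0:ℝ) ≤ r^2 * r^2 by positivity)]
  have hg : Summable g :=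
    Summable.of_nonneg_of_le hgnonneg hbound (hαsum.mul_left _)
  -- termwise bound on the complex series
  have hterm : ∀ n, ‖2 * z ^ 2 / (((α n : ℝ):ℂ) ^ 2 - z ^ 2)‖ ≤ g n := by
    intro n
    have hden : (α n ^ 2 - r ^ 2 : ℝ) ≤ ‖((α n : ℝ):ℂ) ^ 2 - z ^ 2‖ := by
      have h1 := norm_sub_norm_le (((α n : ℝ):ℂ) ^ 2) (z ^ 2)
      have h2 : ‖((α n : ℝ):ℂ) ^ 2‖ = α n ^ 2 := by
        rw [norm_pow, Complex.norm_of_nonneg (hαpos n).le]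
      have h3 : ‖z ^ 2‖ ≤ r ^ 2 := by
        rw [norm_pow]
        exact pow_le_pow_left₀ (norm_nonneg z) hzr 2
      linarith
    have hnum : ‖2 * z ^ 2‖ ≤ 2 * r ^ 2 := by
      rw [norm_mul, norm_pow]
      have h3 : ‖z‖ ^ 2 ≤ r ^ 2 :=
        pow_le_pow_left₀ (norm_nonneg z) hzr 2
      have : ‖(2:ℂ)‖ = 2 := by norm_num
      rw [this]
      nlinarith
    rw [norm_div, hgdef]
    exact div_le_div₀ (by positivity) hnum (hdpos n) hden
  -- summability of the complex series
  have hsumC : Summable (fun n => 2 * z ^ 2 / (((α n : ℝ):ℂ) ^ 2 - z ^ 2)) := by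
    apply Summable.of_norm_bounded hg
    intro n; simpa using hterm n
  have hsumN : Summable (fun n => ‖2 * z ^ 2 / (((α n : ℝ):ℂ) ^ 2 - z ^ 2)‖) := by
    apply Summable.of_nonneg_of_le (fun n => norm_nonneg _) _ hg
    intro n; simpa using hterm n
  -- bound |∑| ≤ ∑ g
  have hTbound : ‖∑' n, 2 * z ^ 2 / (((α n : ℝ):ℂ) ^ 2 - z ^ 2)‖ ≤ ∑' n, g n := by
    calc ‖∑' n, 2 * z ^ 2 / (((α n : ℝ):ℂ) ^ 2 - z ^ 2)‖
        ≤ ∑' n, ‖2 * z ^ 2 / (((α n : ℝ):ℂ) ^ 2 - z ^ 2)‖ := by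
          simpa using norm_tsum_le_tsum_norm hsumN
      _ ≤ ∑' n, g n := by
          apply Summable.tsum_le_tsum _ hsumN hg
          intro n; simpa using hterm n
  set T := z * deriv (deriv f) z / deriv f z with hTdef
  have hTeq : T = -∑' n, 2 * z ^ 2 / (((α n : ℝ):ℂ) ^ 2 - z ^ 2) := hexp z hzlt
  -- the sum S
  have hSsum : ∑' n, 4 * r ^ 2 / (α n ^ 2 - r ^ 2) = 2 * ∑' n, g n := by
    rw [← tsum_mul_left]
    congr 1; funext n; rw [hgdef]; ring
  -- LHS ≥ 1 - 2 ∑ g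
  have hmain : ((1 : ℂ) + T).re - ‖T‖ ≥ 1 - 2 * ∑' n, g n := by
    have h1 : ‖T‖ ≤ ∑' n, g n := by
      rw [hTeq, norm_neg]; exact hTbound
    have h2 : -(∑' n, g n) ≤ T.re := by
      have : |T.re| ≤ ‖T‖ := Complex.abs_re_le_norm T
      have := abs_le.mp this
      linarith [this.1]
    have : ((1 : ℂ) + T).re = 1 + T.re := by simp
    rw [this]; linarith
  -- compute the first RHS
  have hrlt : ‖(r:ℂ)‖ < α 0 := by
    rwa [Complex.norm_of_nonneg hr0]
  have hreq : (r:ℂ) * deriv (deriv f) (r:ℂ) / deriv f (r:ℂ) = -((∑' n, g n : ℝ) : ℂ) := by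
    rw [hexp (r:ℂ) hrlt]
    congr 1
    rw [Complex.ofReal_tsum]
    congr 1; funext n
    rw [hgdef]
    push_cast
    ring
  have hRHS1 : ((1 : ℂ) + 2 * ((r:ℂ) * deriv (deriv f) (r:ℂ) / deriv f (r:ℂ))).re
      = 1 - 2 * ∑' n, g n := by
    rw [hreq]
    simp
    ring
  constructor
  · rw [hRHS1]; exact hmain
  · rw [hSsum]; exact hmain
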